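/- Let K be a convex body in ℝ^n (a compact convex set with nonempty interior) and let Λ be a full-rank lattice in ℝ^n such that K + Λ = ℝ^n. For each positive integer j, let K^j = {x ∈ K : the number of u ∈ Λ with x ∈ K + u equals j}. Then ∑_{j≥1} (1/j)·vol(K^j) = det(Λ); equivalently, the covering density satisfies vol(K)/det(Λ) = vol(K)/(vol(K) − ∑_{j≥1} ((j−1)/j)·vol(K^j)). -/

import Mathlib

open Pointwise MeasureTheory ENNReal

lemma euclidean_volume_fundamentalDomain (n : ℕ)
    (b : Module.Basis (Fin n) ℝ (EuclideanSpace ℝ (Fin n))) :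
    volume (ZSpan.fundamentalDomain b) =
      ENNReal.ofReal |(Matrix.of fun i j => b i j).det| := by
  classical
  set e := (MeasurableEquiv.toLp 2 (Fin n → ℝ)).symm with he
  set b' : Module.Basis (Fin n) ℝ (Fin n → ℝ) :=
    b.map (WithLp.linearEquiv 2 ℝ (Fin n → ℝ)) with hb'
  have hD : ZSpan.fundamentalDomain b = e ⁻¹' (ZSpan.fundamentalDomain b') := by
    ext x
    simp only [ZSpan.fundamentalDomain, Set.mem_setOf_eq, Set.mem_preimage, hb',
      Module.Basis.map_repr, LinearEquiv.trans_apply]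
    rfl
  rw [hD, (EuclideanSpace.volume_preserving_symm_measurableEquiv_toLp (Fin n)).measure_preimage
      (ZSpan.fundamentalDomain_measurableSet b').nullMeasurableSet,
    ZSpan.volume_fundamentalDomain]
  congr 2

/-- For a lattice covering `K + Λ = ℝ^n` by a convex body `K`, letting `K^j` be the set of
points of `K` covered by exactly `j` lattice translates of `K`, we have
`∑_{j≥1} (1/j)·vol(K^j) = det(Λ)`. -/
theorem lattice_covering_layer_decomposition (n : ℕ)
    (K : Set (EuclideanSpace ℝ (Fin n)))
    (hKcpt : IsCompact K) (hKconv : Convex ℝ K) (hKint : (interior K).Nonempty)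
    (b : Module.Basis (Fin n) ℝ (EuclideanSpace ℝ (Fin n)))
    (hcov : K + (↑(Submodule.span ℤ (Set.range b)) : Set (EuclideanSpace ℝ (Fin n)))
      = Set.univ)
    (Kj : ℕ → Set (EuclideanSpace ℝ (Fin n)))
    (hKj : ∀ j, Kj j =
      {x ∈ K | {u | u ∈ Submodule.span ℤ (Set.range b) ∧ x - u ∈ K}.ncard = j}) :
    ∑' j : ℕ, volume (Kj (j + 1)) / (j + 1 : ℝ≥0∞) =
      ENNReal.ofReal |(Matrix.of fun i j => b i j).det| := by
  classical
  set Λ := Submodule.span ℤ (Set.range ⇑b) with hΛdef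
  -- the counting function
  set S : EuclideanSpace ℝ (Fin n) → Set (EuclideanSpace ℝ (Fin n)) := fun x => {u | u ∈ Λ ∧ x - u ∈ K} with hSdef
  set N : EuclideanSpace ℝ (Fin n) → ℕ := fun x => (S x).ncard with hNdef
  have hKm : MeasurableSet K := hKcpt.isClosed.measurableSet
  -- `S x` is finite
  have hSfin : ∀ x, (S x).Finite := by
    intro x
    have h1 : S x = (↑Λ : Set (EuclideanSpace ℝ (Fin n))) ∩ ((fun k => x - k) '' K) := by
      ext v
      constructor
      · rintro ⟨hv, hvK⟩
        exact ⟨hv, ⟨x - v, hvK, sub_sub_cancel x v⟩⟩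
      · rintro ⟨hv, ⟨k, hk, rfl⟩⟩
        exact ⟨hv, by simpa using hk⟩
    have hcl : IsClosed (↑Λ : Set (EuclideanSpace ℝ (Fin n))) :=
      (inferInstance : IsClosed (↑Λ.toAddSubgroup : Set (EuclideanSpace ℝ (Fin n))))
    have hcpt : IsCompact (S x) := by
      rw [h1]
      exact (hKcpt.image (by fun_prop)).inter_left hcl
    have hsub : S x ⊆ (↑Λ : Set (EuclideanSpace ℝ (Fin n))) := fun v hv => hv.1
    have hdisΛ : DiscreteTopology (↑Λ : Set (EuclideanSpace ℝ (Fin n))) :=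
      inferInstanceAs (DiscreteTopology Λ)
    exact hcpt.finite (isDiscrete_iff_discreteTopology.mpr (DiscreteTopology.of_subset hdisΛ hsub))
  -- `S x` is nonempty
  have hSne : ∀ x, (S x).Nonempty := by
    intro x
    have : x ∈ K + (↑Λ : Set (EuclideanSpace ℝ (Fin n))) := by rw [hcov]; trivial
    obtain ⟨k, hk, u, hu, hx⟩ := Set.mem_add.mp this
    exact ⟨u, hu, by rw [← hx]; simpa using hk⟩
  -- translated copies of `K`
  set T : Λ → Set (EuclideanSpace ℝ (Fin n)) := fun u => (fun x => x - (u : EuclideanSpace ℝ (Fin n))) ⁻¹' K with hTdef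
  have hTm : ∀ u, MeasurableSet (T u) := fun u =>
    (measurable_id.sub measurable_const) hKm
  have hTK : ∀ u : Λ, (u +ᵥ K : Set (EuclideanSpace ℝ (Fin n))) = T u := by
    intro u
    ext x
    rw [Set.mem_vadd_set_iff_neg_vadd_mem]
    simp only [hTdef, Set.mem_preimage]
    have : -u +ᵥ x = x - (u : EuclideanSpace ℝ (Fin n)) := by
      show -(u : EuclideanSpace ℝ (Fin n)) + x = x - (u : EuclideanSpace ℝ (Fin n)); abel
    rw [this]
  -- the counting function as a tsum
  set f : EuclideanSpace ℝ (Fin n) → ℝ≥0∞ := fun x => ∑' u : Λ, (T u).indicator 1 x with hfdef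
  have hfmeas : Measurable f :=
    Measurable.ennreal_tsum fun u => measurable_one.indicator (hTm u)
  have hfN : ∀ x, f x = (N x : ℝ≥0∞) := by
    intro x
    have hpre : (Subtype.val ⁻¹' S x : Set Λ).Finite :=
      (hSfin x).preimage (Subtype.val_injective.injOn)
    have h1 : ∀ u : Λ, (T u).indicator (1 : EuclideanSpace ℝ (Fin n) → ℝ≥0∞) x
        = (Subtype.val ⁻¹' S x : Set Λ).indicator 1 u := by
      intro u
      by_cases h : x - (u : EuclideanSpace ℝ (Fin n)) ∈ K
      · have hu : u ∈ (Subtype.val ⁻¹' S x : Set Λ) := ⟨u.2, h⟩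
        rw [Set.indicator_of_mem (show x ∈ T u from h), Set.indicator_of_mem hu]
        rfl
      · have hu : u ∉ (Subtype.val ⁻¹' S x : Set Λ) := fun hc => h hc.2
        rw [Set.indicator_of_notMem (show x ∉ T u from h), Set.indicator_of_notMem hu]
    calc f x = ∑' u : Λ, (Subtype.val ⁻¹' S x : Set Λ).indicator 1 u := by
          rw [hfdef]; exact tsum_congr h1
      _ = ∑ u ∈ hpre.toFinset, (Subtype.val ⁻¹' S x : Set Λ).indicator 1 u := by
          refine tsum_eq_sum ?_
          intro u hu
          exact Set.indicator_of_notMem (by simpa using hu) 1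
      _ = ∑ u ∈ hpre.toFinset, 1 := by
          refine Finset.sum_congr rfl fun u hu => ?_
          exact Set.indicator_of_mem (by simpa using hu) 1
      _ = (hpre.toFinset.card : ℝ≥0∞) := by simp
      _ = ((Subtype.val ⁻¹' S x : Set Λ).ncard : ℝ≥0∞) := by
          rw [Set.ncard_eq_toFinset_card _ hpre]
      _ = (N x : ℝ≥0∞) := by
          congr 1
          have himg : Subtype.val '' (Subtype.val ⁻¹' S x : Set Λ) = S x := by
            ext v
            constructor
            · rintro ⟨w, hw, rfl⟩; exact hw
            · intro hv; exact ⟨⟨v, hv.1⟩, hv, rfl⟩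
          have h2 := Set.ncard_image_of_injective
            (Subtype.val ⁻¹' S x : Set Λ) Subtype.val_injective
          rw [himg] at h2
          rw [hNdef]
          exact h2.symm
  -- measurability of the level sets of `N`
  have hNm : ∀ j : ℕ, MeasurableSet {x | N x = j} := by
    intro j
    have : {x | N x = j} = f ⁻¹' {(j : ℝ≥0∞)} := by
      ext x
      simp only [Set.mem_setOf_eq, Set.mem_preimage, Set.mem_singleton_iff, hfN x]
      exact Nat.cast_inj.symm
    rw [this]
    exact hfmeas (measurableSet_singleton _)
  -- invariance of `N` under lattice translations
  have hNinv : ∀ (u : Λ) (x : EuclideanSpace ℝ (Fin n)), N ((u : EuclideanSpace ℝ (Fin n)) + x) = N x := by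
    intro u x
    have himg : S ((u : EuclideanSpace ℝ (Fin n)) + x) = (fun w => w + (u : EuclideanSpace ℝ (Fin n))) '' S x := by
      ext v
      constructor
      · rintro ⟨hv, hvK⟩
        refine ⟨v - (u : EuclideanSpace ℝ (Fin n)), ⟨sub_mem hv u.2, ?_⟩, sub_add_cancel v _⟩
        have : x - (v - (u : EuclideanSpace ℝ (Fin n))) = (u : EuclideanSpace ℝ (Fin n)) + x - v := by abel
        rw [this]; exact hvK
      · rintro ⟨w, ⟨hw, hwK⟩, rfl⟩
        refine ⟨add_mem hw u.2, ?_⟩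
        have : (u : EuclideanSpace ℝ (Fin n)) + x - (w + (u : EuclideanSpace ℝ (Fin n))) = x - w := by abel
        rw [this]; exact hwK
    rw [hNdef]
    simp only
    rw [himg, Set.ncard_image_of_injective _ (add_left_injective _)]
  -- the fundamental domain
  set D := ZSpan.fundamentalDomain b with hDdef
  have hDm : MeasurableSet D := ZSpan.fundamentalDomain_measurableSet b
  have hfund : IsAddFundamentalDomain Λ D volume := ZSpan.isAddFundamentalDomain b volume
  haveI : MeasurableVAdd Λ (EuclideanSpace ℝ (Fin n)) := (inferInstance : MeasurableVAdd Λ.toAddSubgroup (EuclideanSpace ℝ (Fin n)))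
  haveI : VAddInvariantMeasure Λ (EuclideanSpace ℝ (Fin n)) volume :=
    (inferInstance : VAddInvariantMeasure Λ.toAddSubgroup (EuclideanSpace ℝ (Fin n)) volume)
  -- the pieces of the fundamental domain
  set A : ℕ → Set (EuclideanSpace ℝ (Fin n)) := fun j => {x | N x = j} ∩ D with hAdef
  have hAm : ∀ j, MeasurableSet (A j) := fun j => (hNm j).inter hDm
  -- key identity : volume (Kj (j+1)) = (j+1) * volume (A (j+1))
  have hkey : ∀ j : ℕ, volume (Kj (j + 1)) = ((j : ℝ≥0∞) + 1) * volume (A (j + 1)) := by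
    intro j
    have hKjeq : Kj (j + 1) = K ∩ {x | N x = j + 1} := by
      rw [hKj (j + 1)]; rfl
    have h1 : volume (Kj (j + 1)) = ∑' u : Λ, volume ((u +ᵥ Kj (j + 1)) ∩ D) :=
      hfund.measure_eq_tsum (Kj (j + 1))
    have h2 : ∀ u : Λ, (u +ᵥ Kj (j + 1)) ∩ D = T u ∩ A (j + 1) := by
      intro u
      have hvadd : u +ᵥ Kj (j + 1) = T u ∩ {x | N x = j + 1} := by
        rw [hKjeq, Set.vadd_set_inter, hTK]
        congr 1
        ext x
        rw [Set.mem_vadd_set_iff_neg_vadd_mem]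
        have hx : -u +ᵥ x = x - (u : EuclideanSpace ℝ (Fin n)) := by
          show -(u : EuclideanSpace ℝ (Fin n)) + x = x - (u : EuclideanSpace ℝ (Fin n)); abel
        rw [hx]
        simp only [Set.mem_setOf_eq]
        constructor
        · intro h
          have := hNinv u (x - (u : EuclideanSpace ℝ (Fin n)))
          rw [show (u : EuclideanSpace ℝ (Fin n)) + (x - (u : EuclideanSpace ℝ (Fin n))) = x by abel] at this
          omega
        · intro h
          have := hNinv u (x - (u : EuclideanSpace ℝ (Fin n)))
          rw [show (u : EuclideanSpace ℝ (Fin n)) + (x - (u : EuclideanSpace ℝ (Fin n))) = x by abel] at this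
          omega
      rw [hvadd, hAdef]
      ext x
      simp only [Set.mem_inter_iff, Set.mem_setOf_eq]
      tauto
    have h3 : ∀ u : Λ, volume (T u ∩ A (j + 1))
        = ∫⁻ x in A (j + 1), (T u).indicator 1 x := by
      intro u
      rw [lintegral_indicator_one (hTm u), Measure.restrict_apply (hTm u)]
    have h4 : ∑' u : Λ, ∫⁻ x in A (j + 1), (T u).indicator 1 x
        = ∫⁻ x in A (j + 1), f x := by
      rw [hfdef]
      exact (lintegral_tsum fun u =>
        (measurable_one.indicator (hTm u)).aemeasurable).symm
    have h5 : ∫⁻ x in A (j + 1), f x = ((j : ℝ≥0∞) + 1) * volume (A (j + 1)) := by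
      rw [setLIntegral_congr_fun (hAm (j + 1))
        (fun x hx => ?_), setLIntegral_const]
      rw [hfN x]
      have : N x = j + 1 := hx.1
      rw [this]
      push_cast
      ring
    rw [h1, tsum_congr (fun u => by rw [h2 u, h3 u]), h4, h5]
  -- sum over the pieces
  have hsum : ∑' j : ℕ, volume (A (j + 1)) = volume D := by
    have hunion : (⋃ j : ℕ, A (j + 1)) = D := by
      ext x
      simp only [Set.mem_iUnion, hAdef, Set.mem_inter_iff, Set.mem_setOf_eq]
      constructor
      · rintro ⟨j, _, hD⟩; exact hD
      · intro hx
        have hpos : 0 < N x := (Set.ncard_pos (hSfin x)).mpr (hSne x)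
        exact ⟨N x - 1, (Nat.succ_pred_eq_of_pos hpos).symm, hx⟩
    have hdisj : Pairwise (Function.onFun Disjoint fun j : ℕ => A (j + 1)) := by
      intro i j hij
      refine Set.disjoint_left.mpr ?_
      rintro x ⟨hxi, -⟩ ⟨hxj, -⟩
      exact hij (Nat.succ_injective (hxi.symm.trans hxj))
    rw [← hunion, measure_iUnion hdisj fun j => hAm (j + 1)]
  -- conclusion
  calc ∑' j : ℕ, volume (Kj (j + 1)) / ((j : ℝ≥0∞) + 1)
      = ∑' j : ℕ, volume (A (j + 1)) := by
        refine tsum_congr fun j => ?_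
        refine ((ENNReal.eq_div_iff ?_ ?_).mpr (hkey j).symm).symm
        · simp
        · exact ENNReal.add_ne_top.mpr ⟨ENNReal.natCast_ne_top j, ENNReal.one_ne_top⟩
    _ = volume D := hsum
    _ = ENNReal.ofReal |(Matrix.of fun i j => b i j).det| :=
        euclidean_volume_fundamentalDomain n b
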